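/- There exists a constant c > 0 depending only on β such that for all integers ℓ, k, n with n₀ ≤ ℓ ≤ k ≤ n, one has (γ(2^k)/γ(2^ℓ)) · ∏_{j=ℓ, j≠k}^{n} |1 − γ(2^k)/γ(2^j)|^{−1} ≤ c · 4^{β(k−ℓ)} · 2^{−(β/2)(k−ℓ)²}. -/

import Mathlib

open Filter Topology Asymptotics MeasureTheory

noncomputable section

/-- The hypotheses on the fragmentation coefficient `γ` in the region `n ≥ n₀`:
monotonicity along powers of two and two-sided power-law bounds of exponent `β`. -/
def GammaHyp (β : ℝ) (γ : ℝ → ℝ) (n₀ : ℕ) : Prop :=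
  (∀ ξ : ℝ, 0 < ξ → 0 < γ ξ) ∧
  (∀ n : ℤ, (n₀:ℤ) ≤ n → γ ((2:ℝ) ^ n) < γ ((2:ℝ) ^ (n + 1))) ∧
  ∀ n m : ℤ, (n₀:ℤ) ≤ n → (n₀:ℤ) ≤ m →
    1 / 2 * (2:ℝ) ^ (β * ((n:ℝ) - (m:ℝ))) ≤ γ ((2:ℝ) ^ n) / γ ((2:ℝ) ^ m) ∧
      γ ((2:ℝ) ^ n) / γ ((2:ℝ) ^ m) ≤ 3 / 2 * (2:ℝ) ^ (β * ((n:ℝ) - (m:ℝ)))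

/-- The fundamental solution
`Ψ_n^{(ℓ)}(t) = Σ_{k=ℓ}^n (γ(2^k)/γ(2^ℓ)) ∏_{j=ℓ, j≠k}^n (1 − γ(2^k)/γ(2^j))⁻¹ e^{−γ(2^k)t/4}`
for `n ≥ ℓ`, and `Ψ_n^{(ℓ)}(t) = 0` for `n < ℓ`. -/
def Psi (γ : ℝ → ℝ) (l n : ℤ) (t : ℝ) : ℝ :=
  if l ≤ n then
    ∑ c ∈ Finset.Icc l n,
      γ ((2:ℝ) ^ c) / γ ((2:ℝ) ^ l) *
        (∏ j ∈ (Finset.Icc l n).erase c, (1 - γ ((2:ℝ) ^ c) / γ ((2:ℝ) ^ j))⁻¹) *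
        Real.exp (-(γ ((2:ℝ) ^ c) * t / 4))
  else 0

noncomputable section

private lemma rpow_prod (s : Finset ℤ) (f : ℤ → ℝ) :
    (2:ℝ) ^ (∑ j ∈ s, f j) = ∏ j ∈ s, (2:ℝ) ^ (f j) := by
  induction s using Finset.cons_induction with
  | empty => simp
  | cons a s ha ih =>
      rw [Finset.sum_cons, Finset.prod_cons, Real.rpow_add (by norm_num), ih]

private lemma sum_Ico_reindex (a b : ℤ) (f : ℤ → ℝ) :
    ∑ j ∈ Finset.Ico a b, f j = ∑ i ∈ Finset.range (b - a).toNat, f (a + i) := by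
  rcases le_or_gt a b with h | h
  · refine Finset.sum_nbij' (fun j => (j - a).toNat) (fun i => a + (i : ℤ)) ?_ ?_ ?_ ?_ ?_
    · intro x hx; simp only [Finset.mem_Ico] at hx; simp only [Finset.mem_range]; omega
    · intro x hx; simp only [Finset.mem_range] at hx; simp only [Finset.mem_Ico]; omega
    · intro x hx; simp only [Finset.mem_Ico] at hx; omega
    · intro x hx; simp only [Finset.mem_range] at hx; omega
    · intro x hx; simp only [Finset.mem_Ico] at hx
      congr 1; omega
  · rw [Finset.Ico_eq_empty (by omega), Int.toNat_of_nonpos (by omega)]; simp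

private lemma geom_aux (N : ℕ) : ∑ i ∈ Finset.range N, ((1:ℝ)/2)^(i+1) = 1 - (1/2)^N := by
  induction N with
  | zero => simp
  | succ n ih => rw [Finset.sum_range_succ, ih, pow_succ]; ring

private lemma gauss_id (N : ℕ) : ∑ i ∈ Finset.range N, (i : ℝ) = N * (N - 1) / 2 := by
  induction N with
  | zero => simp
  | succ n ih => rw [Finset.sum_range_succ, ih]; push_cast; ring

private lemma gauss_aux (N : ℕ) : ∑ i ∈ Finset.range N, ((N:ℝ) - i) = N * (N + 1) / 2 := by
  rw [Finset.sum_sub_distrib, Finset.sum_const, Finset.card_range, gauss_id, nsmul_eq_mul]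
  ring

private def Mc (β : ℝ) : ℝ := max 6 (2 / (1 - (2:ℝ) ^ (1 - β)))

private lemma Mc_ge6 (β : ℝ) : 6 ≤ Mc β := le_max_left _ _

private lemma left_factor {β r : ℝ} (hβ : 1 < β) (d : ℕ) (hd : 1 ≤ d)
    (hr : 1/2 * (2:ℝ) ^ (β * (d:ℝ)) ≤ r) :
    |1 - r|⁻¹ ≤ 2 * (2:ℝ) ^ (-(β * (d:ℝ))) * Real.exp (Mc β * (1/2)^d) := by
  have hd1 : (1:ℝ) ≤ (d:ℝ) := by exact_mod_cast hd
  have ha : (2:ℝ) ^ (1 - β) < 1 :=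
    Real.rpow_lt_one_of_one_lt_of_neg (by norm_num) (by linarith)
  have ha0 : (0:ℝ) < (2:ℝ) ^ (1 - β) := Real.rpow_pos_of_pos (by norm_num) _
  set a := (2:ℝ) ^ (1 - β) with ha_def
  have hM : 2 / (1 - a) ≤ Mc β := le_max_right _ _
  have hM6 : 6 ≤ Mc β := Mc_ge6 β
  set M := Mc β with hM_def
  have hMa : 2 ≤ M * (1 - a) := by
    rw [div_le_iff₀ (by linarith)] at hM; linarith
  set v : ℝ := (1/2)^d with hv_def
  have hv0 : (0:ℝ) < v := by positivity
  set u := (2:ℝ) ^ (1 - β * d) with hu_def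
  have hu0 : 0 < u := Real.rpow_pos_of_pos (by norm_num) _
  have hua : u ≤ a := by
    apply Real.rpow_le_rpow_of_exponent_le (by norm_num)
    nlinarith
  have hu2v : u ≤ 2 * v := by
    have h1 : u ≤ (2:ℝ) ^ (1 - (d:ℝ)) :=
      Real.rpow_le_rpow_of_exponent_le (by norm_num) (by nlinarith)
    have h2 : (2:ℝ) ^ (1 - (d:ℝ)) = 2 * v := by
      rw [hv_def, one_div, inv_pow, ← Real.rpow_natCast (2:ℝ) d,
        Real.rpow_sub (by norm_num), Real.rpow_one, div_eq_mul_inv]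
    linarith
  have hpow : (2:ℝ) ^ (β * (d:ℝ)) * u = 2 := by
    rw [hu_def, ← Real.rpow_add (by norm_num)]
    norm_num
  have huu : u < 1 := lt_of_le_of_lt hua ha
  have hb0 : (0:ℝ) < (2:ℝ) ^ (β * (d:ℝ)) := Real.rpow_pos_of_pos (by norm_num) _
  have hr1 : 1/2 * (2:ℝ) ^ (β * (d:ℝ)) - 1 = 1/2 * (2:ℝ) ^ (β * (d:ℝ)) * (1 - u) := by
    rw [mul_sub, mul_one, mul_assoc, hpow]; norm_num
  have hexp : Real.exp (-(M * v)) ≤ 1 - u := by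
    have hMv0 : (0:ℝ) ≤ M * v := by positivity
    have h1 : Real.exp (-(M*v)) ≤ 1 / (1 + M * v) := by
      rw [Real.exp_neg, inv_eq_one_div]
      apply div_le_div_of_nonneg_left (by norm_num) (by linarith)
      linarith [Real.add_one_le_exp (M * v)]
    have h3 : 1 / (1 + M * v) ≤ 1 - u := by
      rw [div_le_iff₀ (by nlinarith)]
      nlinarith [mul_nonneg hMv0 (sub_nonneg.mpr hua),
        mul_le_mul_of_nonneg_left hMa hv0.le]
    linarith
  have hBgt : (2:ℝ) < (2:ℝ) ^ (β * (d:ℝ)) := by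
    nlinarith [mul_lt_mul_of_pos_left huu hb0]
  have hrgt : (1:ℝ) < r := by nlinarith
  rw [abs_sub_comm, abs_of_pos (by linarith)]
  have hkey : 1/2 * (2:ℝ) ^ (β * (d:ℝ)) * Real.exp (-(M*v)) ≤ r - 1 := by
    have h4 : 1/2 * (2:ℝ) ^ (β * (d:ℝ)) * Real.exp (-(M*v)) ≤
        1/2 * (2:ℝ) ^ (β * (d:ℝ)) * (1 - u) :=
      mul_le_mul_of_nonneg_left hexp (by positivity)
    rw [← hr1] at h4; linarith
  have hkpos : (0:ℝ) < 1/2 * (2:ℝ) ^ (β * (d:ℝ)) * Real.exp (-(M*v)) := by positivity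
  refine le_trans (inv_anti₀ hkpos hkey) (le_of_eq ?_)
  rw [Real.exp_neg, Real.rpow_neg (by norm_num)]
  rw [mul_inv, mul_inv, inv_inv]
  norm_num

private lemma right_factor {β r : ℝ} (hβ : 1 < β) (d : ℕ) (hd : 1 ≤ d) (hr0 : 0 < r)
    (hr : r ≤ 3/2 * (2:ℝ) ^ (-(β * (d:ℝ)))) :
    |1 - r|⁻¹ ≤ Real.exp (Mc β * (1/2)^d) := by
  have hd1 : (1:ℝ) ≤ (d:ℝ) := by exact_mod_cast hd
  set v : ℝ := (1/2)^d with hv_def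
  have hv0 : (0:ℝ) < v := by positivity
  have hvhalf : v ≤ 1/2 := by
    rw [hv_def]
    calc ((1:ℝ)/2)^d ≤ (1/2)^1 := pow_le_pow_of_le_one (by norm_num) (by norm_num) hd
    _ = 1/2 := pow_one _
  have h2v : (2:ℝ) ^ (-(β * (d:ℝ))) ≤ v := by
    have h1 : (2:ℝ) ^ (-(β*(d:ℝ))) ≤ (2:ℝ) ^ (-(d:ℝ)) :=
      Real.rpow_le_rpow_of_exponent_le (by norm_num) (by nlinarith)
    have h2 : (2:ℝ) ^ (-(d:ℝ)) = v := by
      rw [hv_def, one_div, inv_pow, ← Real.rpow_natCast (2:ℝ) d,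
        ← Real.rpow_neg (by norm_num)]
    linarith
  have hr34 : r ≤ 3/2 * v := by nlinarith
  have hpos : 0 < 1 - 3/2 * v := by nlinarith
  rw [abs_of_pos (by nlinarith : (0:ℝ) < 1 - r)]
  have hM6 := Mc_ge6 β
  have step : (1 - r)⁻¹ ≤ (1 - 3/2*v)⁻¹ := inv_anti₀ hpos (by linarith)
  have step2 : (1 - 3/2*v)⁻¹ ≤ 1 + 6*v := by
    rw [inv_eq_one_div, div_le_iff₀ hpos]; nlinarith
  have step3 : (1:ℝ) + 6*v ≤ Real.exp (6*v) := by linarith [Real.add_one_le_exp (6*v)]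
  have step4 : Real.exp (6*v) ≤ Real.exp (Mc β * v) := Real.exp_le_exp.mpr (by nlinarith)
  linarith

private lemma final_calc {β m E : ℝ} (hβ1 : 1 < β) (hβ2 : β < 2) (hm : 0 ≤ m) (hE : 0 < E) :
    3/2 * (2:ℝ)^(β*m) * ((2:ℝ)^m * (2:ℝ)^(-(β*(m*(m+1)/2))) * E) ≤
      2*E * (4:ℝ)^(β*m) * (2:ℝ)^(-(β/2)*m^2) := by
  have h4 : (4:ℝ)^(β*m) = (2:ℝ)^(2*(β*m)) := by
    have h42 : (4:ℝ) = (2:ℝ)^(2:ℝ) := by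
      rw [show ((2:ℝ):ℝ) = ((2:ℕ):ℝ) by norm_num, Real.rpow_natCast]; norm_num
    rw [h42]
    exact (Real.rpow_mul (by norm_num) 2 (β*m)).symm
  rw [h4, ← Real.rpow_add (by norm_num : (0:ℝ) < 2) m]
  have hexp : (2:ℝ)^(β*m + (m + -(β*(m*(m+1)/2)))) ≤ (2:ℝ)^(2*(β*m) + -(β/2)*m^2) := by
    apply Real.rpow_le_rpow_of_exponent_le (by norm_num)
    nlinarith [mul_nonneg hm (by linarith : (0:ℝ) ≤ 3*β/2 - 1)]
  calc 3/2 * (2:ℝ)^(β*m) * ((2:ℝ)^(m + -(β*(m*(m+1)/2))) * E)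
      = 3/2 * E * (2:ℝ)^(β*m + (m + -(β*(m*(m+1)/2)))) := by
        rw [Real.rpow_add (by norm_num : (0:ℝ) < 2) (β*m) (m + -(β*(m*(m+1)/2)))]; ring
    _ ≤ 2 * E * (2:ℝ)^(2*(β*m) + -(β/2)*m^2) := by
        nlinarith [hexp, Real.rpow_pos_of_pos (by norm_num : (0:ℝ) < 2) (β*m + (m + -(β*(m*(m+1)/2))))]
    _ = 2*E * (2:ℝ)^(2*(β*m)) * (2:ℝ)^(-(β/2)*m^2) := by
        rw [Real.rpow_add (by norm_num : (0:ℝ) < 2) (2*(β*m)) (-(β/2)*m^2)]; ring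


/-- There is `c > 0` depending only on `β` with
`(γ(2^k)/γ(2^ℓ)) ∏_{j=ℓ, j≠k}^n |1 − γ(2^k)/γ(2^j)|⁻¹ ≤ c 4^{β(k−ℓ)} 2^{−(β/2)(k−ℓ)²}`
for all `n₀ ≤ ℓ ≤ k ≤ n`. -/
theorem stmt12 (β : ℝ) (hβ : β ∈ Set.Ioo (1:ℝ) 2) :
    ∃ c > (0:ℝ), ∀ (γ : ℝ → ℝ) (n₀ : ℕ), GammaHyp β γ n₀ →
      ∀ l c' n : ℤ, (n₀:ℤ) ≤ l → l ≤ c' → c' ≤ n →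
        γ ((2:ℝ) ^ c') / γ ((2:ℝ) ^ l) *
            ∏ j ∈ (Finset.Icc l n).erase c', |1 - γ ((2:ℝ) ^ c') / γ ((2:ℝ) ^ j)|⁻¹ ≤
          c * (4:ℝ) ^ (β * ((c':ℝ) - (l:ℝ))) * (2:ℝ) ^ (-(β / 2) * ((c':ℝ) - (l:ℝ)) ^ 2) := by
  obtain ⟨hβ1, hβ2⟩ := hβ
  refine ⟨2 * Real.exp (2 * Mc β), by positivity, ?_⟩
  intro γ n₀ hγ l k n hl hlk hkn
  obtain ⟨hpos, -, hbound⟩ := hγ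
  have hM6 : (6:ℝ) ≤ Mc β := Mc_ge6 β
  have hk0 : (n₀:ℤ) ≤ k := le_trans hl hlk
  have hr0 : ∀ j : ℤ, 0 < γ ((2:ℝ)^j) := fun j => hpos _ (zpow_pos (by norm_num) j)
  set N : ℕ := (k - l).toNat with hN_def
  have hNc : ((N:ℝ)) = (k:ℝ) - (l:ℝ) := by
    have h := Int.toNat_of_nonneg (by omega : (0:ℤ) ≤ k - l)
    rw [hN_def]
    exact_mod_cast congrArg (Int.cast : ℤ → ℝ) h
  have hsplit : (Finset.Icc l n).erase k = Finset.Ico l k ∪ Finset.Ioc k n := by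
    ext j
    simp only [Finset.mem_erase, Finset.mem_Icc, Finset.mem_union, Finset.mem_Ico,
      Finset.mem_Ioc]
    omega
  have hdisj : Disjoint (Finset.Ico l k) (Finset.Ioc k n) := by
    rw [Finset.disjoint_left]
    intro j hj hj'
    simp only [Finset.mem_Ico] at hj
    simp only [Finset.mem_Ioc] at hj'
    omega
  set e : ℤ → ℝ := fun j => ((1:ℝ)/2)^((k - j).natAbs) with he_def
  set b : ℤ → ℝ := fun j => if j < k then 2 * (2:ℝ)^(-(β * ((k:ℝ) - (j:ℝ)))) else 1 with hb_def
  -- per-factor bound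
  have hfac : ∀ j ∈ (Finset.Icc l n).erase k,
      |1 - γ ((2:ℝ) ^ k) / γ ((2:ℝ) ^ j)|⁻¹ ≤ b j * Real.exp (Mc β * e j) := by
    intro j hj
    simp only [Finset.mem_erase, Finset.mem_Icc] at hj
    obtain ⟨hjk, hjl, hjn⟩ := hj
    have hj0 : (n₀:ℤ) ≤ j := le_trans hl hjl
    rcases hjk.lt_or_gt with hlt | hgt
    · -- j < k
      have hd1 : 1 ≤ (k - j).natAbs := by omega
      have hdc : (((k - j).natAbs : ℕ) : ℝ) = (k:ℝ) - (j:ℝ) := by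
        have h : (((k - j).natAbs : ℕ) : ℤ) = k - j := Int.natAbs_of_nonneg (by omega)
        have h2 := congrArg (Int.cast : ℤ → ℝ) h
        rw [Int.cast_natCast, Int.cast_sub] at h2
        exact h2
      have hlow := (hbound k j hk0 hj0).1
      rw [← hdc] at hlow
      have hres := left_factor hβ1 _ hd1 hlow
      simp only [hb_def, he_def, if_pos hlt]
      rw [← hdc]
      exact hres
    · -- j > k
      have hd1 : 1 ≤ (k - j).natAbs := by omega
      have hdc : (((k - j).natAbs : ℕ) : ℝ) = (j:ℝ) - (k:ℝ) := by
        have h : (((k - j).natAbs : ℕ) : ℤ) = j - k := by omega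
        have h2 := congrArg (Int.cast : ℤ → ℝ) h
        rw [Int.cast_natCast, Int.cast_sub] at h2
        exact h2
      have hup := (hbound k j hk0 hj0).2
      have hexp1 : β * ((k:ℝ) - (j:ℝ)) = -(β * (((k - j).natAbs : ℕ) : ℝ)) := by
        rw [hdc]; ring
      rw [hexp1] at hup
      have hres := right_factor hβ1 _ hd1 (div_pos (hr0 k) (hr0 j)) hup
      simp only [hb_def, he_def, if_neg (by omega : ¬ j < k), one_mul]
      exact hres
  -- product bound
  have hprod1 : ∏ j ∈ (Finset.Icc l n).erase k, |1 - γ ((2:ℝ) ^ k) / γ ((2:ℝ) ^ j)|⁻¹ ≤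
      ∏ j ∈ (Finset.Icc l n).erase k, b j * Real.exp (Mc β * e j) :=
    Finset.prod_le_prod (fun j _ => by positivity) hfac
  rw [Finset.prod_mul_distrib, ← Real.exp_sum] at hprod1
  -- sum of e ≤ 2
  have hsum_e : ∑ j ∈ (Finset.Icc l n).erase k, Mc β * e j ≤ 2 * Mc β := by
    rw [← Finset.mul_sum]
    have hse : ∑ j ∈ (Finset.Icc l n).erase k, e j ≤ 2 := by
      rw [hsplit, Finset.sum_union hdisj]
      have h1 : ∑ j ∈ Finset.Ico l k, e j ≤ 1 := by
        rw [sum_Ico_reindex]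
        have hc : ∀ i ∈ Finset.range (k - l).toNat,
            e (l + (i:ℤ)) = ((1:ℝ)/2)^(((k-l).toNat - 1 - i) + 1) := by
          intro i hi
          simp only [Finset.mem_range] at hi
          simp only [he_def]
          congr 1
          omega
        rw [Finset.sum_congr rfl hc, Finset.sum_range_reflect (fun i => ((1:ℝ)/2)^(i+1)),
          geom_aux]
        have := pow_nonneg (by norm_num : (0:ℝ) ≤ 1/2) (k-l).toNat
        linarith
      have h2 : ∑ j ∈ Finset.Ioc k n, e j ≤ 1 := by
        have hIoc : Finset.Ioc k n = Finset.Ico (k+1) (n+1) := by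
          ext j
          simp only [Finset.mem_Ioc, Finset.mem_Ico]
          omega
        rw [hIoc, sum_Ico_reindex]
        have hc : ∀ i ∈ Finset.range (n + 1 - (k+1)).toNat,
            e (k + 1 + (i:ℤ)) = ((1:ℝ)/2)^(i+1) := by
          intro i _
          simp only [he_def]
          congr 1
          omega
        rw [Finset.sum_congr rfl hc, geom_aux]
        have := pow_nonneg (by norm_num : (0:ℝ) ≤ 1/2) (n+1-(k+1)).toNat
        linarith
      linarith
    nlinarith [hse]
  -- product of b
  have hprod_b : ∏ j ∈ (Finset.Icc l n).erase k, b j =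
      (2:ℝ)^(N:ℝ) * (2:ℝ)^(-(β * ((N:ℝ)*((N:ℝ)+1)/2))) := by
    rw [hsplit, Finset.prod_union hdisj]
    have h2 : ∏ j ∈ Finset.Ioc k n, b j = 1 := by
      apply Finset.prod_eq_one
      intro j hj
      simp only [Finset.mem_Ioc] at hj
      simp only [hb_def, if_neg (by omega : ¬ j < k)]
    have hcg : ∀ j ∈ Finset.Ico l k, b j = 2 * (2:ℝ)^(-(β * ((k:ℝ) - (j:ℝ)))) := by
      intro j hj
      simp only [Finset.mem_Ico] at hj
      simp only [hb_def, if_pos hj.2]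
    have hS : ∑ j ∈ Finset.Ico l k, (-(β * ((k:ℝ) - (j:ℝ)))) =
        -(β * ((N:ℝ)*((N:ℝ)+1)/2)) := by
      rw [sum_Ico_reindex]
      have hc : ∀ i ∈ Finset.range (k - l).toNat,
          (-(β * ((k:ℝ) - ((l + (i:ℤ) : ℤ) : ℝ)))) = -β * (((k-l).toNat:ℝ) - (i:ℝ)) := by
        intro i _
        have : (((k-l).toNat:ℝ)) = (k:ℝ) - (l:ℝ) := hNc
        push_cast
        rw [this]
        ring
      rw [Finset.sum_congr rfl hc, ← Finset.mul_sum, gauss_aux]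
      rw [hN_def]
      ring
    have h1 : ∏ j ∈ Finset.Ico l k, b j =
        (2:ℝ)^(N:ℝ) * (2:ℝ)^(-(β * ((N:ℝ)*((N:ℝ)+1)/2))) := by
      rw [Finset.prod_congr rfl hcg, Finset.prod_mul_distrib, Finset.prod_const,
        Int.card_Ico, ← rpow_prod, hS, ← hN_def, Real.rpow_natCast]
    rw [h1, h2, mul_one]
  have hpre : γ ((2:ℝ) ^ k) / γ ((2:ℝ) ^ l) ≤ 3/2 * (2:ℝ)^(β*((k:ℝ)-(l:ℝ))) :=
    (hbound k l hk0 hl).2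
  -- assemble
  have hPn : (0:ℝ) ≤ ∏ j ∈ (Finset.Icc l n).erase k, |1 - γ ((2:ℝ) ^ k) / γ ((2:ℝ) ^ j)|⁻¹ :=
    Finset.prod_nonneg (fun j _ => by positivity)
  have hB : ∏ j ∈ (Finset.Icc l n).erase k, |1 - γ ((2:ℝ) ^ k) / γ ((2:ℝ) ^ j)|⁻¹ ≤
      (2:ℝ)^(N:ℝ) * (2:ℝ)^(-(β * ((N:ℝ)*((N:ℝ)+1)/2))) * Real.exp (2 * Mc β) := by
    calc ∏ j ∈ (Finset.Icc l n).erase k, |1 - γ ((2:ℝ) ^ k) / γ ((2:ℝ) ^ j)|⁻¹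
        ≤ (∏ j ∈ (Finset.Icc l n).erase k, b j) *
            Real.exp (∑ j ∈ (Finset.Icc l n).erase k, Mc β * e j) := hprod1
      _ ≤ (∏ j ∈ (Finset.Icc l n).erase k, b j) * Real.exp (2 * Mc β) := by
          apply mul_le_mul_of_nonneg_left (Real.exp_le_exp.mpr hsum_e)
          rw [hprod_b]; positivity
      _ = (2:ℝ)^(N:ℝ) * (2:ℝ)^(-(β * ((N:ℝ)*((N:ℝ)+1)/2))) * Real.exp (2 * Mc β) := by
          rw [hprod_b]
  have hchain : γ ((2:ℝ) ^ k) / γ ((2:ℝ) ^ l) *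
      ∏ j ∈ (Finset.Icc l n).erase k, |1 - γ ((2:ℝ) ^ k) / γ ((2:ℝ) ^ j)|⁻¹ ≤
      3/2 * (2:ℝ)^(β*((k:ℝ)-(l:ℝ))) *
        ((2:ℝ)^(N:ℝ) * (2:ℝ)^(-(β * ((N:ℝ)*((N:ℝ)+1)/2))) * Real.exp (2 * Mc β)) := by
    apply mul_le_mul hpre hB hPn (by positivity)
  refine le_trans hchain ?_
  rw [← hNc]
  have hfin := final_calc (β := β) (m := (N:ℝ)) (E := Real.exp (2 * Mc β)) hβ1 hβ2
    (Nat.cast_nonneg N) (Real.exp_pos _)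
  calc 3/2 * (2:ℝ)^(β*(N:ℝ)) *
        ((2:ℝ)^(N:ℝ) * (2:ℝ)^(-(β * ((N:ℝ)*((N:ℝ)+1)/2))) * Real.exp (2 * Mc β))
      ≤ 2 * Real.exp (2 * Mc β) * (4:ℝ)^(β*(N:ℝ)) * (2:ℝ)^(-(β/2)*(N:ℝ)^2) := hfin
    _ = 2 * Real.exp (2 * Mc β) * (4:ℝ)^(β*(N:ℝ)) * (2:ℝ)^(-(β/2)*(N:ℝ)^2) := rfl
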